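/- For every n ≥ 2 and every S-path s of order n with associated tile sequence t₀, …, t_{T_n−1} (the m-th edge of s is a side of dark tile t_m), the centroids of consecutive tiles differ by a unit grid vector: for each m there exists d_m ∈ Fin 6 with centroid(t_{m+1}) = centroid(t_m) + u(d_m). Moreover, the resulting direction word (d₀, …, d_{T_n−2}) is a W-path of order n (its position sequence, started at 0, is injective with image G_n, it goes from P(0,0) to P(n−1,0), and its supplemented word 0·w·0 contains no forbidden turn). -/

import Mathlib

/-- The unit vector in direction `d·π/3`, viewing the plane as `ℂ`. -/
noncomputable def dirU (d : Fin 6) : ℂ :=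
  Complex.exp ((d : ℕ) * Real.pi / 3 * Complex.I)

/-- The position sequence of a direction word: `p₀ = 0`, `p_{m+1} = p_m + dirU (ds_m)`. -/
noncomputable def posSeq (ds : List (Fin 6)) (m : ℕ) : ℂ :=
  ((ds.take m).map dirU).sum

/-- The grid point `P(i,j) = i·u(0) + j·u(1)`. -/
noncomputable def Pt (i j : ℕ) : ℂ := (i : ℂ) * dirU 0 + (j : ℂ) * dirU 1

/-- The triangular number `T_n = n(n+1)/2`. -/
def triNum (n : ℕ) : ℕ := n * (n + 1) / 2

/-- The inscribed grid `G_n = {P(i,j) : i + j ≤ n - 1}`. -/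
def inscribedGrid (n : ℕ) : Set ℂ := {p | ∃ i j : ℕ, i + j ≤ n - 1 ∧ p = Pt i j}

/-- An H-path of order `n`: a direction word of length `T_n - 1` whose position sequence
is injective with image `G_n`, starting at `P(0,0) = 0` and ending at `P(n-1,0)`. -/
def IsHPath (n : ℕ) (w : List (Fin 6)) : Prop :=
  w.length = triNum n - 1 ∧
  (Function.Injective fun m : Fin (w.length + 1) => posSeq w m) ∧
  (Set.range fun m : Fin (w.length + 1) => posSeq w m) = inscribedGrid n ∧
  posSeq w 0 = Pt 0 0 ∧
  posSeq w w.length = Pt (n - 1) 0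

/-- `(a, b)` is a forbidden turn if `b ≡ a + 4 (mod 6)` with `a` even, or
`b ≡ a + 2 (mod 6)` with `a` odd (addition in `Fin 6` is mod 6). -/
def ForbiddenTurn (a b : Fin 6) : Prop :=
  (Even (a : ℕ) ∧ b = a + 4) ∨ (Odd (a : ℕ) ∧ b = a + 2)

/-- A W-path of order `n`: an H-path whose supplemented word `0·w·0` contains no
forbidden turn among its consecutive pairs. -/
def IsWPath (n : ℕ) (w : List (Fin 6)) : Prop :=
  IsHPath n w ∧ List.Chain' (fun a b => ¬ ForbiddenTurn a b) ((0 : Fin 6) :: (w ++ [0]))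

/-- The `m`-th edge of a direction word: the closed segment `[p_m, p_{m+1}]`. -/
noncomputable def edgeSeg (s : List (Fin 6)) (m : ℕ) : Set ℂ :=
  segment ℝ (posSeq s m) (posSeq s (m + 1))

/-- `e` is a side of the dark (upward) tile `Δ(i,j)`, i.e. one of its three closed edges. -/
def IsSideOf (e : Set ℂ) (i j : ℕ) : Prop :=
  e = segment ℝ (Pt i j) (Pt (i + 1) j) ∨
  e = segment ℝ (Pt (i + 1) j) (Pt i (j + 1)) ∨
  e = segment ℝ (Pt i j) (Pt i (j + 1))

/-- An S-path of order `n`: a direction word of length `T_n` from `0` to `n·u(0)`,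
whose edges are pairwise distinct sides of dark tiles, such that the assignment of
edges to dark tiles is a bijection onto the set of dark tiles (indexed by base points
`(i,j)` with `i + j ≤ n - 1`). -/
def IsSPath (n : ℕ) (s : List (Fin 6)) : Prop :=
  s.length = triNum n ∧
  posSeq s 0 = 0 ∧
  posSeq s s.length = (n : ℂ) * dirU 0 ∧
  (∀ m m' : Fin s.length, edgeSeg s m = edgeSeg s m' → m = m') ∧
  ∃ t : Fin s.length → {p : ℕ × ℕ // p.1 + p.2 ≤ n - 1},
    (∀ m : Fin s.length, IsSideOf (edgeSeg s (m : ℕ)) (t m).1.1 (t m).1.2) ∧ Function.Bijective t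

/-- The centroid of the dark tile `Δ(i,j)`. -/
noncomputable def centroidUp (i j : ℕ) : ℂ := Pt i j + (dirU 0 + dirU 1) / 3

/-! ### Auxiliary lemmas -/

lemma dirU_zero' : dirU 0 = 1 := by simp [dirU]

lemma dirU_pow' (d : Fin 6) : dirU d = dirU 1 ^ (d : ℕ) := by
  rw [dirU, dirU, ← Complex.exp_nat_mul]
  congr 1
  rw [show ((1:Fin 6):ℕ) = 1 from rfl]
  push_cast
  ring

lemma zeta_im' : (dirU 1).im = Real.sqrt 3 / 2 := by
  have : dirU 1 = Complex.exp ((Real.pi/3 : ℝ) * Complex.I) := by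
    rw [dirU]; norm_num
  rw [this, Complex.exp_ofReal_mul_I_im, Real.sin_pi_div_three]

lemma zeta_cube' : dirU 1 ^ 3 = -1 := by
  rw [dirU, ← Complex.exp_nat_mul]
  have : ((3:ℕ):ℂ) * (((1:Fin 6):ℕ) * Real.pi / 3 * Complex.I) = Real.pi * Complex.I := by
    rw [show ((1:Fin 6):ℕ) = 1 from rfl]; push_cast; ring
  rw [this, Complex.exp_pi_mul_I]

lemma zeta_sq' : dirU 1 ^ 2 = dirU 1 - 1 := by
  have h3 := zeta_cube'
  have hne : dirU 1 + 1 ≠ 0 := by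
    intro h
    have : (dirU 1).im = 0 := by
      have := congrArg Complex.im h
      simpa using this
    rw [zeta_im'] at this
    have := Real.sqrt_pos.2 (by norm_num : (0:ℝ) < 3)
    linarith
  have hfac : (dirU 1 + 1) * (dirU 1 ^ 2 - dirU 1 + 1) = 0 := by
    have : (dirU 1 + 1) * (dirU 1 ^ 2 - dirU 1 + 1) = dirU 1 ^ 3 + 1 := by ring
    rw [this, h3]; ring
  have := (mul_eq_zero.1 hfac).resolve_left hne
  linear_combination this

def cA : Fin 6 → ℤ
  | 0 => 1 | 1 => 0 | 2 => -1 | 3 => -1 | 4 => 0 | 5 => 1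

def cB : Fin 6 → ℤ
  | 0 => 0 | 1 => 1 | 2 => 1 | 3 => 0 | 4 => -1 | 5 => -1

def svA : Fin 6 → ℤ
  | 0 => 1 | 1 => 0 | 2 => 0 | 3 => 0 | 4 => 0 | 5 => 1

def svB : Fin 6 → ℤ
  | 0 => 0 | 1 => 1 | 2 => 1 | 3 => 0 | 4 => 0 | 5 => 0

lemma dirU_eq (d : Fin 6) : dirU d = (cA d : ℂ) + (cB d : ℂ) * dirU 1 := by
  have h := zeta_sq'
  have e0 : dirU 0 = (cA 0 : ℂ) + (cB 0 : ℂ) * dirU 1 := by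
    rw [dirU_pow', show ((0:Fin 6):ℕ) = 0 from rfl, show cA 0 = 1 from rfl,
      show cB 0 = 0 from rfl]; push_cast; ring
  have e1 : dirU 1 = (cA 1 : ℂ) + (cB 1 : ℂ) * dirU 1 := by
    rw [show cA 1 = 0 from rfl, show cB 1 = 1 from rfl]; push_cast; ring
  have e2 : dirU 2 = (cA 2 : ℂ) + (cB 2 : ℂ) * dirU 1 := by
    rw [dirU_pow', show ((2:Fin 6):ℕ) = 2 from rfl, show cA 2 = -1 from rfl,
      show cB 2 = 1 from rfl]; push_cast; linear_combination h
  have e3 : dirU 3 = (cA 3 : ℂ) + (cB 3 : ℂ) * dirU 1 := by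
    rw [dirU_pow', show ((3:Fin 6):ℕ) = 3 from rfl, show cA 3 = -1 from rfl,
      show cB 3 = 0 from rfl]; push_cast; linear_combination (dirU 1 + 1) * h
  have e4 : dirU 4 = (cA 4 : ℂ) + (cB 4 : ℂ) * dirU 1 := by
    rw [dirU_pow', show ((4:Fin 6):ℕ) = 4 from rfl, show cA 4 = 0 from rfl,
      show cB 4 = -1 from rfl]; push_cast; linear_combination (dirU 1 ^ 2 + dirU 1) * h
  have e5 : dirU 5 = (cA 5 : ℂ) + (cB 5 : ℂ) * dirU 1 := by
    rw [dirU_pow', show ((5:Fin 6):ℕ) = 5 from rfl, show cA 5 = 1 from rfl,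
      show cB 5 = -1 from rfl]; push_cast; linear_combination (dirU 1 ^ 3 + dirU 1 ^ 2 - 1) * h
  fin_cases d
  exacts [e0, e1, e2, e3, e4, e5]

lemma coe_indep {a b : ℤ} (h : (a:ℂ) + (b:ℂ) * dirU 1 = 0) : a = 0 ∧ b = 0 := by
  have him := congrArg Complex.im h
  simp only [Complex.add_im, Complex.mul_im, Complex.intCast_im, Complex.intCast_re,
    Complex.zero_im, zeta_im', zero_add, zero_mul, add_zero] at him
  have h3 : Real.sqrt 3 ≠ 0 := by positivity
  have hb : (b:ℝ) = 0 := by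
    rcases mul_eq_zero.1 him with h' | h'
    · exact h'
    · exfalso; apply h3; linarith
  have hb' : b = 0 := by exact_mod_cast hb
  subst hb'
  simp at h
  exact ⟨by exact_mod_cast h, rfl⟩

lemma coords_eq {a b a' b' : ℤ} (h : (a:ℂ) + (b:ℂ) * dirU 1 = (a':ℂ) + (b':ℂ) * dirU 1) :
    a = a' ∧ b = b' := by
  have : ((a - a' : ℤ):ℂ) + ((b - b' : ℤ):ℂ) * dirU 1 = 0 := by push_cast; linear_combination h
  have := coe_indep this
  omega

lemma Pt_eq (i j : ℕ) : Pt i j = ((i:ℤ):ℂ) + ((j:ℤ):ℂ) * dirU 1 := by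
  rw [Pt, dirU_zero']; push_cast; ring

lemma Pt_inj {i j i' j' : ℕ} (h : Pt i j = Pt i' j') : i = i' ∧ j = j' := by
  rw [Pt_eq, Pt_eq] at h
  have := coords_eq h
  omega

lemma Pt_ne {x1 y1 x2 y2 : ℕ} (h : ¬(x1 = x2 ∧ y1 = y2)) : Pt x1 y1 ≠ Pt x2 y2 :=
  fun he => h (Pt_inj he)

lemma seg_endpoints {a b c d : ℂ} (h : segment ℝ a b = segment ℝ c d) (hcd : c ≠ d) :
    (a = c ∧ b = d) ∨ (a = d ∧ b = c) := by
  have hc : c ∈ segment ℝ a b := h ▸ left_mem_segment ℝ c d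
  have hd : d ∈ segment ℝ a b := h ▸ right_mem_segment ℝ c d
  have ha : a ∈ segment ℝ c d := h ▸ left_mem_segment ℝ a b
  have hb : b ∈ segment ℝ c d := h ▸ right_mem_segment ℝ a b
  rcases eq_or_ne a b with hab | hab
  · subst hab
    rw [segment_same] at hc hd
    exact absurd (hc.trans hd.symm) hcd
  rw [segment_eq_image'] at hc hd ha hb
  obtain ⟨s, ⟨hs0, hs1⟩, hcs⟩ := hc
  obtain ⟨t, ⟨ht0, ht1⟩, hdt⟩ := hd
  obtain ⟨u, ⟨hu0, hu1⟩, hau⟩ := ha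
  obtain ⟨v, ⟨hv0, hv1⟩, hbv⟩ := hb
  have hba : b - a ≠ 0 := sub_ne_zero.2 (Ne.symm hab)
  simp only [Complex.real_smul] at hcs hdt hau hbv
  have e1 : ((s:ℂ) + u * (t - s)) * (b - a) = 0 := by
    rw [← hcs, ← hdt] at hau
    linear_combination hau
  have e2 : ((s:ℂ) + v * (t - s)) * (b - a) = 1 * (b - a) := by
    rw [← hcs, ← hdt] at hbv
    linear_combination hbv
  have f1 : (s:ℂ) + u * (t - s) = 0 := by
    rcases mul_eq_zero.1 e1 with h' | h'
    · exact h'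
    · exact absurd h' hba
  have f2 : (s:ℂ) + v * (t - s) = 1 := mul_right_cancel₀ hba e2
  have g1 : s + u * (t - s) = 0 := by exact_mod_cast f1
  have g2 : s + v * (t - s) = 1 := by exact_mod_cast f2
  rcases le_or_gt s t with hst | hst
  · have hts : t - s = 1 := by nlinarith
    have hs : s = 0 := by nlinarith
    have ht : t = 1 := by nlinarith
    subst hs; subst ht
    left
    constructor
    · rw [← hcs]; push_cast; ring
    · rw [← hdt]; push_cast; ring
  · have hts : s - t = 1 := by nlinarith
    have hs : s = 1 := by nlinarith
    have ht : t = 0 := by nlinarith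
    subst hs; subst ht
    right
    constructor
    · rw [← hdt]; push_cast; ring
    · rw [← hcs]; push_cast; ring

def vtxZ (i j x y : ℤ) : Prop :=
  (x = i ∧ y = j) ∨ (x = i + 1 ∧ y = j) ∨ (x = i ∧ y = j + 1)

lemma exists_dir {i j i' j' x y : ℤ} (h1 : vtxZ i j x y) (h2 : vtxZ i' j' x y)
    (hne : ¬(i = i' ∧ j = j')) : ∃ d : Fin 6, i' = i + cA d ∧ j' = j + cB d := by
  have key : (i' = i + 1 ∧ j' = j) ∨ (i' = i ∧ j' = j + 1) ∨ (i' = i - 1 ∧ j' = j + 1) ∨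
      (i' = i - 1 ∧ j' = j) ∨ (i' = i ∧ j' = j - 1) ∨ (i' = i + 1 ∧ j' = j - 1) := by
    rcases h1 with ⟨hx, hy⟩ | ⟨hx, hy⟩ | ⟨hx, hy⟩ <;>
      rcases h2 with ⟨hx', hy'⟩ | ⟨hx', hy'⟩ | ⟨hx', hy'⟩ <;> omega
  rcases key with ⟨h, h'⟩ | ⟨h, h'⟩ | ⟨h, h'⟩ | ⟨h, h'⟩ | ⟨h, h'⟩ | ⟨h, h'⟩
  · exact ⟨0, by rw [show cA 0 = 1 from rfl, show cB 0 = 0 from rfl]; omega⟩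
  · exact ⟨1, by rw [show cA 1 = 0 from rfl, show cB 1 = 1 from rfl]; omega⟩
  · exact ⟨2, by rw [show cA 2 = -1 from rfl, show cB 2 = 1 from rfl]; omega⟩
  · exact ⟨3, by rw [show cA 3 = -1 from rfl, show cB 3 = 0 from rfl]; omega⟩
  · exact ⟨4, by rw [show cA 4 = 0 from rfl, show cB 4 = -1 from rfl]; omega⟩
  · exact ⟨5, by rw [show cA 5 = 1 from rfl, show cB 5 = -1 from rfl]; omega⟩

lemma tup (a : Fin 6) :
    (cA a = 1 ∧ cB a = 0 ∧ svA a = 1 ∧ svB a = 0) ∨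
    (cA a = 0 ∧ cB a = 1 ∧ svA a = 0 ∧ svB a = 1) ∨
    (cA a = -1 ∧ cB a = 1 ∧ svA a = 0 ∧ svB a = 1) ∨
    (cA a = -1 ∧ cB a = 0 ∧ svA a = 0 ∧ svB a = 0) ∨
    (cA a = 0 ∧ cB a = -1 ∧ svA a = 0 ∧ svB a = 0) ∨
    (cA a = 1 ∧ cB a = -1 ∧ svA a = 1 ∧ svB a = 0) := by
  fin_cases a <;> decide

lemma sharedZ (a : Fin 6) {i j x y : ℤ} (h1 : vtxZ i j x y)
    (h2 : vtxZ (i + cA a) (j + cB a) x y) : x = i + svA a ∧ y = j + svB a := by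
  unfold vtxZ at h1 h2
  rcases tup a with ⟨ha, hb, hsa, hsb⟩ | ⟨ha, hb, hsa, hsb⟩ | ⟨ha, hb, hsa, hsb⟩ |
    ⟨ha, hb, hsa, hsb⟩ | ⟨ha, hb, hsa, hsb⟩ | ⟨ha, hb, hsa, hsb⟩ <;>
    rw [ha, hb] at h2 <;> rw [hsa, hsb] <;> omega

lemma forb_cases {a b : Fin 6} (hf : ForbiddenTurn a b) :
    (a = 0 ∧ b = 4) ∨ (a = 1 ∧ b = 3) ∨ (a = 2 ∧ b = 0) ∨
    (a = 3 ∧ b = 5) ∨ (a = 4 ∧ b = 2) ∨ (a = 5 ∧ b = 1) := by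
  rcases hf with ⟨he, rfl⟩ | ⟨ho, rfl⟩
  · fin_cases a <;> revert he <;> decide
  · fin_cases a <;> revert ho <;> decide

lemma forb_sv {a b : Fin 6} (hf : ForbiddenTurn a b) :
    svA a = cA a + svA b ∧ svB a = cB a + svB b := by
  rcases forb_cases hf with ⟨h1, h2⟩ | ⟨h1, h2⟩ | ⟨h1, h2⟩ | ⟨h1, h2⟩ | ⟨h1, h2⟩ | ⟨h1, h2⟩ <;>
    subst h1 <;> subst h2 <;> constructor <;> decide

def vtxPt (i j : ℕ) (p : ℂ) : Prop :=
  p = Pt i j ∨ p = Pt (i + 1) j ∨ p = Pt i (j + 1)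

lemma vtxPt_toZ {i j : ℕ} {p : ℂ} (h : vtxPt i j p) :
    ∃ x y : ℤ, p = (x:ℂ) + (y:ℂ) * dirU 1 ∧ vtxZ (i:ℤ) (j:ℤ) x y := by
  rcases h with rfl | rfl | rfl
  · exact ⟨i, j, Pt_eq i j, Or.inl ⟨rfl, rfl⟩⟩
  · exact ⟨(i:ℤ) + 1, j, by rw [Pt_eq]; push_cast; ring, Or.inr (Or.inl ⟨rfl, rfl⟩)⟩
  · exact ⟨i, (j:ℤ) + 1, by rw [Pt_eq]; push_cast; ring, Or.inr (Or.inr ⟨rfl, rfl⟩)⟩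

lemma seg_not_singleton {A B p : ℂ} (hne : A ≠ B) (h : ({p} : Set ℂ) = segment ℝ A B) :
    False := by
  have h1 : A ∈ ({p} : Set ℂ) := by rw [h]; exact left_mem_segment ℝ A B
  have h2 : B ∈ ({p} : Set ℂ) := by rw [h]; exact right_mem_segment ℝ A B
  rw [Set.mem_singleton_iff] at h1 h2
  exact hne (h1.trans h2.symm)

lemma side_ne {i j : ℕ} {p q : ℂ} (h : IsSideOf (segment ℝ p q) i j) : p ≠ q := by
  rintro rfl
  rw [segment_same] at h
  rcases h with h | h | h
  · exact seg_not_singleton (Pt_ne (by omega)) h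
  · exact seg_not_singleton (Pt_ne (by omega)) h
  · exact seg_not_singleton (Pt_ne (by omega)) h

lemma side_vertices {i j : ℕ} {p q : ℂ} (h : IsSideOf (segment ℝ p q) i j) :
    vtxPt i j p ∧ vtxPt i j q := by
  rcases h with h | h | h
  · rcases seg_endpoints h (Pt_ne (by omega)) with ⟨h1, h2⟩ | ⟨h1, h2⟩
    · exact ⟨Or.inl h1, Or.inr (Or.inl h2)⟩
    · exact ⟨Or.inr (Or.inl h1), Or.inl h2⟩
  · rcases seg_endpoints h (Pt_ne (by omega)) with ⟨h1, h2⟩ | ⟨h1, h2⟩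
    · exact ⟨Or.inr (Or.inl h1), Or.inr (Or.inr h2)⟩
    · exact ⟨Or.inr (Or.inr h1), Or.inr (Or.inl h2)⟩
  · rcases seg_endpoints h (Pt_ne (by omega)) with ⟨h1, h2⟩ | ⟨h1, h2⟩
    · exact ⟨Or.inl h1, Or.inr (Or.inr h2)⟩
    · exact ⟨Or.inr (Or.inr h1), Or.inl h2⟩

lemma side_unique {e : Set ℂ} {i j i' j' : ℕ} (h : IsSideOf e i j) (h' : IsSideOf e i' j') :
    i = i' ∧ j = j' := by
  rcases h with rfl | rfl | rfl <;> rcases h' with h' | h' | h' <;>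
    rcases seg_endpoints h' (Pt_ne (by omega)) with ⟨h1, h2⟩ | ⟨h1, h2⟩ <;>
    · have e1 := Pt_inj h1
      have e2 := Pt_inj h2
      omega

lemma posSeq_zero (ds : List (Fin 6)) : posSeq ds 0 = 0 := by simp [posSeq]

lemma posSeq_succ (ds : List (Fin 6)) (m : ℕ) (h : m < ds.length) :
    posSeq ds (m + 1) = posSeq ds m + dirU (ds.getD m 0) := by
  have hm : m < (ds.map dirU).length := by simpa using h
  have hs := List.sum_take_succ (ds.map dirU) m hm
  rw [posSeq, posSeq, List.map_take, List.map_take, hs, List.getElem_map,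
    List.getD_eq_getElem ds 0 h]

lemma centroid_rel {i j i' j' : ℕ} {d : Fin 6} (h1 : ((i':ℕ):ℤ) = (i:ℤ) + cA d)
    (h2 : ((j':ℕ):ℤ) = (j:ℤ) + cB d) : centroidUp i' j' = centroidUp i j + dirU d := by
  have e1 : ((i':ℕ):ℂ) = (i:ℂ) + ((cA d : ℤ):ℂ) := by exact_mod_cast h1
  have e2 : ((j':ℕ):ℂ) = (j:ℂ) + ((cB d : ℤ):ℂ) := by exact_mod_cast h2
  rw [centroidUp, centroidUp, dirU_eq d, Pt_eq, Pt_eq]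
  push_cast
  push_cast at e1 e2
  linear_combination e1 + dirU 1 * e2

lemma centroid_rel' {i j i' j' : ℕ} {d : Fin 6}
    (h : centroidUp i' j' = centroidUp i j + dirU d) :
    ((i':ℕ):ℤ) = (i:ℤ) + cA d ∧ ((j':ℕ):ℤ) = (j:ℤ) + cB d := by
  rw [centroidUp, centroidUp, dirU_eq d, Pt_eq, Pt_eq] at h
  have h' : (((i':ℕ):ℤ):ℂ) + (((j':ℕ):ℤ):ℂ) * dirU 1
      = (((i:ℤ) + cA d : ℤ):ℂ) + (((j:ℤ) + cB d : ℤ):ℂ) * dirU 1 := by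
    push_cast
    push_cast at h
    linear_combination h
  have := coords_eq h'
  omega

set_option maxHeartbeats 2000000 in
/-- For every `n ≥ 2`, every S-path `s` of order `n` and every associated
tile sequence `t` (the `m`-th edge of `s` is a side of the dark tile `t m`), centroids of
consecutive tiles differ by a unit grid vector, and the resulting direction word of length
`T_n - 1` is a W-path of order `n`. -/
theorem sPath_centroids_give_wPath (n : ℕ) (hn : 2 ≤ n) (s : List (Fin 6))
    (hs : IsSPath n s) (t : ℕ → ℕ × ℕ)
    (ht : ∀ m < s.length, (t m).1 + (t m).2 ≤ n - 1 ∧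
      IsSideOf (edgeSeg s m) (t m).1 (t m).2) :
    (∀ m, m + 1 < s.length → ∃ d : Fin 6,
        centroidUp (t (m + 1)).1 (t (m + 1)).2 = centroidUp (t m).1 (t m).2 + dirU d) ∧
    ∃ w : List (Fin 6), w.length = s.length - 1 ∧
      (∀ m < s.length - 1,
        centroidUp (t (m + 1)).1 (t (m + 1)).2
          = centroidUp (t m).1 (t m).2 + dirU (w.getD m 0)) ∧
      IsWPath n w := by
  obtain ⟨hlen, hp0, hpend, hinjE, tf, htf, htbij⟩ := hs
  have hL3 : 3 ≤ s.length := by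
    rw [hlen]; unfold triNum
    have h6 : 6 ≤ n * (n + 1) := by nlinarith
    omega
  -- nondegeneracy of edges
  have hnd : ∀ m, m < s.length → posSeq s m ≠ posSeq s (m + 1) := by
    intro m hm
    exact side_ne (ht m hm).2
  -- vertices of each edge
  have hvtx : ∀ m, m < s.length →
      vtxPt (t m).1 (t m).2 (posSeq s m) ∧ vtxPt (t m).1 (t m).2 (posSeq s (m + 1)) := by
    intro m hm
    exact side_vertices (ht m hm).2
  -- t agrees with the bijection tf
  have htt : ∀ m (hm : m < s.length),
      (t m).1 = (tf ⟨m, hm⟩).1.1 ∧ (t m).2 = (tf ⟨m, hm⟩).1.2 := by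
    intro m hm
    exact side_unique (ht m hm).2 (htf ⟨m, hm⟩)
  -- tiles are pairwise distinct
  have hdist : ∀ m m', m < s.length → m' < s.length → m ≠ m' →
      ¬((t m).1 = (t m').1 ∧ (t m).2 = (t m').2) := by
    intro m m' hm hm' hne hcc
    obtain ⟨a1, a2⟩ := htt m hm
    obtain ⟨b1, b2⟩ := htt m' hm'
    have heq : tf ⟨m, hm⟩ = tf ⟨m', hm'⟩ := by
      apply Subtype.ext
      apply Prod.ext <;> omega
    have := htbij.1 heq
    simp only [Fin.mk.injEq] at this
    exact hne this
  -- first tile is (0,0)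
  have ht0 : (t 0).1 = 0 ∧ (t 0).2 = 0 := by
    have h := (hvtx 0 (by omega)).1
    rw [hp0] at h
    have h00 : (0:ℂ) = Pt 0 0 := by simp [Pt]
    rcases h with h | h | h <;> rw [h00] at h <;> have := Pt_inj h <;> omega
  -- last tile is (n-1, 0)
  have hlast : (t (s.length - 1)).1 = n - 1 ∧ (t (s.length - 1)).2 = 0 := by
    have hm : s.length - 1 < s.length := by omega
    have h := (hvtx (s.length - 1) hm).2
    rw [show s.length - 1 + 1 = s.length by omega, hpend] at h
    have hn0 : (n:ℂ) * dirU 0 = Pt n 0 := by simp [Pt]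
    have hcon := (ht (s.length - 1) hm).1
    rcases h with h | h | h <;> rw [hn0] at h <;> have := Pt_inj h <;> omega
  -- claim 1 : consecutive centroids differ by a unit vector
  have claim1 : ∀ m, m + 1 < s.length → ∃ d : Fin 6,
      centroidUp (t (m + 1)).1 (t (m + 1)).2 = centroidUp (t m).1 (t m).2 + dirU d := by
    intro m hm1
    have hm : m < s.length := by omega
    obtain ⟨x1, y1, hq1, hz1⟩ := vtxPt_toZ (hvtx m hm).2
    obtain ⟨x2, y2, hq2, hz2⟩ := vtxPt_toZ (hvtx (m + 1) hm1).1
    obtain ⟨rfl, rfl⟩ := coords_eq (hq1.symm.trans hq2)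
    have hne := hdist m (m + 1) hm hm1 (by omega)
    have hneZ : ¬(((t m).1 : ℤ) = ((t (m + 1)).1 : ℤ) ∧
        ((t m).2 : ℤ) = ((t (m + 1)).2 : ℤ)) := by
      intro hcc
      exact hne ⟨by exact_mod_cast hcc.1, by exact_mod_cast hcc.2⟩
    obtain ⟨d, hd1, hd2⟩ := exists_dir hz1 hz2 hneZ
    exact ⟨d, centroid_rel hd1 hd2⟩
  -- direction function
  obtain ⟨D, hD⟩ : ∃ D : ℕ → Fin 6, ∀ m, m + 1 < s.length →
      centroidUp (t (m + 1)).1 (t (m + 1)).2 = centroidUp (t m).1 (t m).2 + dirU (D m) :=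
    ⟨fun m => dite (m + 1 < s.length) (fun h => (claim1 m h).choose) (fun _ => 0),
      fun m h => by simp only [dif_pos h]; exact (claim1 m h).choose_spec⟩
  have hPt : ∀ m, m + 1 < s.length →
      Pt (t (m + 1)).1 (t (m + 1)).2 = Pt (t m).1 (t m).2 + dirU (D m) := by
    intro m h
    have hh := hD m h
    rw [centroidUp, centroidUp] at hh
    linear_combination hh
  -- the word w
  obtain ⟨w, hwlen, hwget, hwel⟩ : ∃ w : List (Fin 6), w.length = s.length - 1 ∧
      (∀ m, m < s.length - 1 → w.getD m 0 = D m) ∧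
      (∀ k (hk : k < w.length), w.get ⟨k, hk⟩ = D k) := by
    refine ⟨(List.range (s.length - 1)).map D, by simp, ?_, ?_⟩
    · intro m hm
      rw [List.getD_eq_getElem _ _ (by simpa using hm)]
      simp
    · intro k hk
      simp
  have hw2 : 2 ≤ w.length := by omega
  -- position sequence of w follows tile coordinates
  have hpos : ∀ m, m ≤ s.length - 1 → posSeq w m = Pt (t m).1 (t m).2 := by
    intro m
    induction m with
    | zero =>
      intro _
      rw [posSeq_zero, ht0.1, ht0.2]
      simp [Pt]
    | succ k ih =>
      intro hk
      have hk1 : k < w.length := by omega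
      rw [posSeq_succ w k hk1, ih (by omega), hwget k (by omega)]
      exact (hPt k (by omega)).symm
  refine ⟨claim1, w, hwlen, ?_, ?_⟩
  · intro m hm
    rw [hwget m hm]
    exact hD m (by omega)
  constructor
  · -- IsHPath
    refine ⟨by rw [hwlen, hlen], ?_, ?_, ?_, ?_⟩
    · -- injective
      intro m1 m2 hq
      have l1 : (m1 : ℕ) ≤ s.length - 1 := by omega
      have l2 : (m2 : ℕ) ≤ s.length - 1 := by omega
      simp only at hq
      rw [hpos _ l1, hpos _ l2] at hq
      have hco := Pt_inj hq
      by_contra hne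
      have hne' : (m1 : ℕ) ≠ (m2 : ℕ) := fun hcc => hne (Fin.ext hcc)
      exact hdist _ _ (by omega) (by omega) hne' hco
    · -- range
      ext p
      constructor
      · rintro ⟨m, rfl⟩
        have lm : (m : ℕ) ≤ s.length - 1 := by omega
        exact ⟨(t m).1, (t m).2, (ht m (by omega)).1, (hpos m lm).symm ▸ (hpos m lm)⟩
      · rintro ⟨i, j, hij, rfl⟩
        obtain ⟨mf, hmf⟩ := htbij.2 ⟨(i, j), hij⟩
        have hmfl : (mf : ℕ) < w.length + 1 := by omega
        refine ⟨⟨mf, hmfl⟩, ?_⟩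
        have hco := htt mf mf.isLt
        rw [Fin.eta, hmf] at hco
        simp only
        rw [hpos mf (by omega), hco.1, hco.2]
    · -- start
      rw [hpos 0 (by omega), ht0.1, ht0.2]
    · rw [hwlen, hpos (s.length - 1) (le_refl _), hlast.1, hlast.2]
  · -- chain'
    show List.IsChain _ _
    rw [List.isChain_iff_getElem]
    intro i hi
    show ¬ ForbiddenTurn (((0 : Fin 6) :: (w ++ [0])).get ⟨i, by omega⟩)
      (((0 : Fin 6) :: (w ++ [0])).get ⟨i + 1, hi⟩)
    have hi' : i < w.length + 1 := by
      simp only [List.length_cons, List.length_append, List.length_singleton,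
        List.length_nil] at hi
      omega
    have hgB' : ∀ (kk : ℕ) (hk1 : 1 ≤ kk) (hk2 : kk ≤ w.length)
        (h2 : kk < ((0 : Fin 6) :: (w ++ [0])).length),
        ((0 : Fin 6) :: (w ++ [0])).get ⟨kk, h2⟩ = D (kk - 1) := by
      intro kk hk1 hk2 h2
      obtain ⟨k, rfl⟩ : ∃ k, kk = k + 1 := ⟨kk - 1, by omega⟩
      have hkw : k < w.length := by omega
      simp only [List.get_eq_getElem, List.getElem_cons_succ]
      rw [List.getElem_append_left hkw]
      rw [show k + 1 - 1 = k from rfl]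
      exact hwel k hkw
    -- the inner forbidden-turn contradiction, for m with m+2 < s.length
    have inner : ∀ m, m + 2 < s.length → ¬ ForbiddenTurn (D m) (D (m + 1)) := by
      intro m hm2 hf
      have hm1 : m + 1 < s.length := by omega
      have hm : m < s.length := by omega
      obtain ⟨c1m, c2m⟩ := centroid_rel' (hD m hm1)
      obtain ⟨c1m', c2m'⟩ := centroid_rel' (hD (m + 1) hm2)
      obtain ⟨x1, y1, hq1, hz1⟩ := vtxPt_toZ (hvtx m hm).2
      obtain ⟨x2, y2, hq2, hz2⟩ := vtxPt_toZ (hvtx (m + 1) hm1).1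
      obtain ⟨rfl, rfl⟩ := coords_eq (hq1.symm.trans hq2)
      obtain ⟨x3, y3, hq3, hz3⟩ := vtxPt_toZ (hvtx (m + 1) hm1).2
      obtain ⟨x4, y4, hq4, hz4⟩ := vtxPt_toZ (hvtx (m + 2) hm2).1
      obtain ⟨rfl, rfl⟩ := coords_eq (hq3.symm.trans hq4)
      rw [c1m, c2m] at hz2
      rw [c1m', c2m'] at hz4
      obtain ⟨e1, e2⟩ := sharedZ (D m) hz1 hz2
      obtain ⟨f1, f2⟩ := sharedZ (D (m + 1)) hz3 hz4
      obtain ⟨g1, g2⟩ := forb_sv hf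
      have hx : x1 = x3 := by omega
      have hy : y1 = y3 := by omega
      apply hnd (m + 1) hm1
      rw [hq2, hq4, hx, hy]
    rcases Nat.lt_or_ge i 1 with h0 | h1
    · -- i = 0 : pair (0, D 0)
      have hi0 : i = 0 := by omega
      subst hi0
      have hg1 : ((0 : Fin 6) :: (w ++ [0])).get ⟨0 + 1, by omega⟩ = D 0 :=
        hgB' 1 (by omega) (by omega) _
      rw [hg1]
      intro hf
      have hf0 : ForbiddenTurn 0 (D 0) := hf
      obtain ⟨h1, h2⟩ | ⟨h1, h2⟩ | ⟨h1, h2⟩ | ⟨h1, h2⟩ | ⟨h1, h2⟩ | ⟨h1, h2⟩ :=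
        forb_cases hf0
      · obtain ⟨d1, d2⟩ := centroid_rel' (hD 0 (by omega))
        rw [h2] at d2
        rw [show cB 4 = -1 from rfl] at d2
        have := ht0.2
        omega
      all_goals exact absurd h1 (by decide)
    rcases Nat.lt_or_ge i w.length with hmid | hend2
    · -- middle
      obtain ⟨k, rfl⟩ : ∃ k, i = k + 1 := ⟨i - 1, by omega⟩
      have hg1 : ((0 : Fin 6) :: (w ++ [0])).get ⟨k + 1, by omega⟩ = D k := by
        have := hgB' (k + 1) (by omega) (by omega) (by
          simp only [List.length_cons, List.length_append, List.length_singleton,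
            List.length_nil]; omega)
        rwa [show k + 1 - 1 = k from rfl] at this
      have hg2 : ((0 : Fin 6) :: (w ++ [0])).get ⟨k + 1 + 1, by omega⟩ = D (k + 1) := by
        have := hgB' (k + 2) (by omega) (by omega) (by
          simp only [List.length_cons, List.length_append, List.length_singleton,
            List.length_nil]; omega)
        rwa [show k + 2 - 1 = k + 1 from rfl] at this
      rw [hg1, hg2]
      exact inner k (by omega)
    · -- last : i = w.length, pair (D (w.length - 1), 0)
      have hiw : i = w.length := by omega
      subst hiw
      have hg1 : ((0 : Fin 6) :: (w ++ [0])).get ⟨w.length, by omega⟩ = D (w.length - 1) :=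
        hgB' w.length (by omega) (le_refl _) _
      have hg2 : ((0 : Fin 6) :: (w ++ [0])).get ⟨w.length + 1, by omega⟩ = 0 := by
        simp only [List.get_eq_getElem, List.getElem_cons_succ]
        rw [List.getElem_append_right (le_refl w.length)]
        simp
      rw [hg1, hg2]
      intro hf
      obtain ⟨h1, h2⟩ | ⟨h1, h2⟩ | ⟨h1, h2⟩ | ⟨h1, h2⟩ | ⟨h1, h2⟩ | ⟨h1, h2⟩ :=
        forb_cases hf
      · exact absurd h2 (by decide)
      · exact absurd h2 (by decide)
      · -- D (w.length - 1) = 2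
        have hmm : w.length - 1 + 1 < s.length := by omega
        obtain ⟨d1, d2⟩ := centroid_rel' (hD (w.length - 1) hmm)
        rw [h1] at d2
        rw [show cB 2 = 1 from rfl] at d2
        rw [show w.length - 1 + 1 = s.length - 1 by omega] at d2
        have := hlast.2
        omega
      · exact absurd h2 (by decide)
      · exact absurd h2 (by decide)
      · exact absurd h2 (by decide)
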